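/- For every positive integer n and every integer m ≥ α_t − t + 1, one has 𝔡^m(I,n) = N(I,n). -/

import Mathlib

open Finset

/-- Sequences of length `ℓ` (positions `1..ℓ`) with entries in `{1,…,n}`,
encoded as functions `ℕ → ℕ` vanishing outside `[1, ℓ]`. -/
def Seqs (ℓ n : ℕ) : Set (ℕ → ℕ) :=
  {v | (∀ i ∈ Finset.Icc 1 ℓ, v i ∈ Finset.Icc 1 n) ∧ ∀ i, i ∉ Finset.Icc 1 ℓ → v i = 0}

/-- Descent set of a sequence of length `ℓ`:
`Des(v) = {i ∈ {1,…,ℓ-1} : v_i > v_{i+1}}`. -/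
def Des (ℓ : ℕ) (v : ℕ → ℕ) : Set ℕ :=
  {i | 1 ≤ i ∧ i < ℓ ∧ v (i + 1) < v i}

/-- Number of occurrences of the value `j` among positions `1..ℓ` of `v`. -/
def mult (ℓ : ℕ) (v : ℕ → ℕ) (j : ℕ) : ℕ :=
  ((Finset.Icc 1 ℓ).filter fun i => v i = j).card

/-- `𝔡^m(I, n)`: the number of sequences of length `n*m`, in which each of `1,…,n`
appears exactly `m` times, whose descent set is `I`. -/
noncomputable def dP (m : ℕ) (I : Finset ℕ) (n : ℕ) : ℕ :=
  Set.ncard {w ∈ Seqs (n * m) n |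
    Des (n * m) w = ↑I ∧ ∀ j ∈ Finset.Icc 1 n, mult (n * m) w j = m}

/-- `N(I, n)`: the number of sequences `v = (v_1, …, v_{α_t})` with entries in `{1,…,n}`
such that `Des v = I \ {α_t}` and `v_{α_t} ≠ 1`. -/
noncomputable def Ncount (I : Finset ℕ) (n : ℕ) : ℕ :=
  Set.ncard {v ∈ Seqs (I.sup id) n |
    Des (I.sup id) v = ↑(I.erase (I.sup id)) ∧ v (I.sup id) ≠ 1}

/-- `D^m(I, n)`: the number of sequences `v = (v_1, …, v_{α_t})` with entries in `{1,…,n}`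
such that `Des v = I \ {α_t}` and each of `1,…,n` appears at most `m` times in `v`. -/
noncomputable def Dcount (m : ℕ) (I : Finset ℕ) (n : ℕ) : ℕ :=
  Set.ncard {v ∈ Seqs (I.sup id) n |
    Des (I.sup id) v = ↑(I.erase (I.sup id)) ∧ ∀ j ∈ Finset.Icc 1 n, mult (I.sup id) v j ≤ m}

/-- `b_i(I)`: the number of sequences `v = (v_1, …, v_{α_t})` with entries in `{1,…,i+1}`
such that `Des v = I \ {α_t}`, every number in `{2,…,i+1}` occurs in `v`, and `v_{α_t} ≠ 1`. -/
noncomputable def bcoef (I : Finset ℕ) (i : ℕ) : ℕ :=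
  Set.ncard {v ∈ Seqs (I.sup id) (i + 1) |
    Des (I.sup id) v = ↑(I.erase (I.sup id)) ∧
    (∀ l ∈ Finset.Icc 2 (i + 1), ∃ j ∈ Finset.Icc 1 (I.sup id), v j = l) ∧
    v (I.sup id) ≠ 1}

/-- `L(I)`: the length of the longest run of consecutive integers contained in `I`. -/
def longestRun (I : Finset ℕ) : ℕ :=
  I.sup fun a => ((Finset.Icc a (I.sup id)).filter fun b => Finset.Icc a b ⊆ I).card

/-- `alphaVal I k` is the `k`-th smallest element of `I` (`1`-indexed), with `alphaVal I 0 = 0`. -/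
def alphaVal (I : Finset ℕ) (k : ℕ) : ℕ :=
  if k = 0 then 0 else (I.sort (· ≤ ·)).getD (k - 1) 0

/-- For a composition `A = (a_1,…,a_s)` of `t = |I|`, `sigmaC I A i` is
`σ_{i+1} = β_{a_1+⋯+a_i+1} + ⋯ + β_{a_1+⋯+a_{i+1}}`, where `β` is the sequence of first
differences of `(0, α_1, …, α_t)`; by telescoping this equals
`α_{a_1+⋯+a_{i+1}} - α_{a_1+⋯+a_i}`. -/
def sigmaC (I : Finset ℕ) {t : ℕ} (A : Composition t) (i : ℕ) : ℕ :=
  alphaVal I (A.sizeUpTo (i + 1)) - alphaVal I (A.sizeUpTo i)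

/-- `C(A, I)` for a composition `A = (a_1,…,a_r)`: the number of sequences
`v = (v_1, …, v_{α_t})` with entries in `{1,…,r}` such that `Des v = I \ {α_t}`
and the number `j` appears exactly `a_j` times in `v`, for each `j ∈ {1,…,r}`. -/
noncomputable def Ccount (I : Finset ℕ) {N : ℕ} (A : Composition N) : ℕ :=
  Set.ncard {v ∈ Seqs (I.sup id) A.length |
    Des (I.sup id) v = ↑(I.erase (I.sup id)) ∧
    ∀ j ∈ Finset.Icc 1 A.length, mult (I.sup id) v j = A.blocks.getD (j - 1) 0}

/-- The generalized binomial coefficient `C(a, i) = a(a-1)⋯(a-i+1)/i!` for an integer `a`. -/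
def genChoose (a : ℤ) (i : ℕ) : ℚ :=
  (∏ j ∈ Finset.range i, ((a : ℚ) - (j : ℚ))) / (Nat.factorial i)
private lemma mult_sum_eq (ℓ n : ℕ) (v : ℕ → ℕ)
    (hv : ∀ i ∈ Finset.Icc 1 ℓ, v i ∈ Finset.Icc 1 n) :
    ∑ j ∈ Finset.Icc 1 n, mult ℓ v j = ℓ := by
  classical
  have h := Finset.card_eq_sum_card_fiberwise hv
  have h2 : (Finset.Icc 1 ℓ).card = ℓ := by rw [Nat.card_Icc]; omega
  rw [h2] at h
  exact h.symm

private lemma des_mono (ℓ : ℕ) (w : ℕ → ℕ) (D : Finset ℕ) (hD : Des ℓ w = ↑D)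
    (a : ℕ) (ha : 1 ≤ a) :
    ∀ b, a ≤ b → b ≤ ℓ → (∀ p, a ≤ p → p < b → p ∉ D) → w a ≤ w b := by
  intro b
  induction b with
  | zero => intro hab _ _; exact absurd hab (by omega)
  | succ b ih =>
    intro hab hb h
    rcases Nat.lt_or_ge a (b + 1) with hlt | hge
    · have hab' : a ≤ b := by omega
      have h1 : w a ≤ w b := ih hab' (by omega) (fun p hp hp' => h p hp (by omega))
      have h2 : b ∉ Des ℓ w := by
        rw [hD]; simpa using h b hab' (by omega)
      have h3 : ¬ w (b + 1) < w b := fun hc => h2 ⟨by omega, by omega, hc⟩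
      omega
    · have : a = b + 1 := by omega
      subst this; exact le_refl _

private lemma mult_bound (ℓ n : ℕ) (v : ℕ → ℕ)
    (hq : ∀ i ∈ Finset.Icc 1 ℓ, v i ∈ Finset.Icc 1 n)
    (D : Finset ℕ) (hD : Des ℓ v = ↑D) (j : ℕ) :
    mult ℓ v j + D.card ≤ ℓ := by
  classical
  set T := (Finset.Icc 1 ℓ).filter (fun i => ¬ v i = j) with hT
  have hmem : ∀ i ∈ D, i ∈ Des ℓ v := by
    intro i hi; rw [hD]; exact_mod_cast hi
  set P : ℕ → Prop := fun d => ∃ p ∈ Finset.Icc 1 d, v p = j ∧ ∀ r ∈ Finset.Ico p d, r ∈ D with hP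
  have key : D.card ≤ T.card := by
    apply Finset.card_le_card_of_injOn (fun d => if P d then d + 1 else d)
    · intro d hd
      obtain ⟨hd1, hd2, hd3⟩ := hmem d hd
      by_cases h : P d
      · simp only [if_pos h]
        obtain ⟨p, hp, hvp, hall⟩ := h
        simp only [Finset.mem_Icc] at hp
        -- chain: v r ≤ v p for p ≤ r ≤ d
        have chain : ∀ r, p ≤ r → r ≤ d → v r ≤ v p := by
          intro r
          induction r with
          | zero => intro h1 _; omega
          | succ r ih =>
            intro h1 h2
            rcases Nat.lt_or_ge p (r + 1) with hlt | hge
            · have hr : r ∈ D := hall r (by simp [Finset.mem_Ico]; omega)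
              have := hmem r hr
              obtain ⟨_, _, hdes⟩ := this
              have := ih (by omega) (by omega)
              omega
            · have : p = r + 1 := by omega
              subst this; exact le_refl _
        have hvd : v d ≤ v p := chain d hp.2 (le_refl _)
        rw [hT]
        simp only [Finset.mem_coe, Finset.mem_filter, Finset.mem_Icc]
        constructor
        · omega
        · omega
      · simp only [if_neg h]
        rw [hT]
        simp only [Finset.mem_coe, Finset.mem_filter, Finset.mem_Icc]
        refine ⟨⟨hd1, by omega⟩, ?_⟩
        intro hvd
        exact h ⟨d, by simp [Finset.mem_Icc]; omega, hvd, by simp⟩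
    · -- InjOn
      have asym : ∀ a ∈ D, ∀ b ∈ D, a < b →
          (if P a then a + 1 else a) = (if P b then b + 1 else b) → False := by
        intro a ha b hb hab heq
        have hfa : (if P a then a + 1 else a) ≤ a + 1 := by split <;> omega
        have hfb : b ≤ (if P b then b + 1 else b) := by split <;> omega
        have hb1 : b = a + 1 := by omega
        have hPa : P a := by
          by_contra h
          rw [if_neg h] at heq
          have : b ≤ a := by omega
          omega
        have hPb : ¬ P b := by
          intro h
          rw [if_pos hPa, if_pos h] at heq
          omega
        apply hPb
        obtain ⟨p, hp, hvp, hall⟩ := hPa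
        simp only [Finset.mem_Icc] at hp
        refine ⟨p, by simp [Finset.mem_Icc]; omega, hvp, ?_⟩
        intro r hr
        simp only [Finset.mem_Ico] at hr
        rcases Nat.lt_or_ge r a with h1 | h1
        · exact hall r (by simp [Finset.mem_Ico]; omega)
        · have : r = a := by omega
          subst this; exact ha
      intro a ha b hb heq
      simp only [Finset.mem_coe] at ha hb
      rcases lt_trichotomy a b with h | h | h
      · exact absurd heq (fun he => asym a ha b hb h he)
      · exact h
      · exact absurd heq (fun he => asym b hb a ha h he.symm)
  have hsplit : mult ℓ v j + T.card = ℓ := by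
    have := Finset.card_filter_add_card_filter_not (s := Finset.Icc 1 ℓ)
      (p := fun i => v i = j)
    rw [Nat.card_Icc] at this
    simpa [mult, hT] using this
  omega

private lemma mult_one_bound (ℓ n : ℕ) (v : ℕ → ℕ)
    (hq : ∀ i ∈ Finset.Icc 1 ℓ, v i ∈ Finset.Icc 1 n)
    (I : Finset ℕ) (hIpos : ∀ x ∈ I, 1 ≤ x) (hsub : ∀ x ∈ I, x ≤ ℓ)
    (hl : 1 ≤ ℓ) (hℓI : ℓ ∈ I)
    (hD : Des ℓ v = ↑(I.erase ℓ)) (hvl : ¬ v ℓ = 1) :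
    mult ℓ v 1 + I.card ≤ ℓ := by
  classical
  have hsubT : I ⊆ (Finset.Icc 1 ℓ).filter (fun i => ¬ v i = 1) := by
    intro i hi
    simp only [Finset.mem_filter, Finset.mem_Icc]
    refine ⟨⟨hIpos i hi, hsub i hi⟩, ?_⟩
    by_cases hiℓ : i = ℓ
    · subst hiℓ; exact hvl
    · have : i ∈ Des ℓ v := by
        rw [hD]; simp [Finset.mem_erase, hiℓ, hi]
      obtain ⟨h1, h2, h3⟩ := this
      have : v (i + 1) ∈ Finset.Icc 1 n := hq (i + 1) (by simp [Finset.mem_Icc]; omega)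
      simp only [Finset.mem_Icc] at this
      omega
  have h1 : I.card ≤ ((Finset.Icc 1 ℓ).filter (fun i => ¬ v i = 1)).card :=
    Finset.card_le_card hsubT
  have h2 := Finset.card_filter_add_card_filter_not (s := Finset.Icc 1 ℓ)
    (p := fun i => v i = 1)
  rw [Nat.card_Icc] at h2
  simp only [mult]
  omega
private def truncF (ℓ : ℕ) (w : ℕ → ℕ) : ℕ → ℕ := fun i => if i ∈ Finset.Icc 1 ℓ then w i else 0

private lemma truncF_eq (ℓ : ℕ) (w : ℕ → ℕ) (i : ℕ) (h1 : 1 ≤ i) (h2 : i ≤ ℓ) :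
    truncF ℓ w i = w i := by
  simp [truncF, Finset.mem_Icc, h1, h2]

private lemma truncF_eq0 (ℓ : ℕ) (w : ℕ → ℕ) (i : ℕ) (h : i ∉ Finset.Icc 1 ℓ) :
    truncF ℓ w i = 0 := by
  simp only [truncF, if_neg h]

/-- for every positive integer `n` and every `m ≥ α_t - t + 1`,
`𝔡^m(I,n) = N(I,n)`. -/
theorem stmt_2 (I : Finset ℕ) (hI : I.Nonempty) (hIpos : ∀ x ∈ I, 1 ≤ x)
    (n : ℕ) (hn : 1 ≤ n) (m : ℕ) (hm : I.sup id - I.card + 1 ≤ m) :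
    dP m I n = Ncount I n := by
  classical
  unfold dP Ncount
  set ℓ := I.sup id with hℓdef
  set L := n * m with hLdef
  obtain ⟨a, haI, hav⟩ := Finset.exists_mem_eq_sup I hI id
  have hℓI : ℓ ∈ I := by rw [hℓdef, hav]; exact haI
  have hℓ1 : 1 ≤ ℓ := hIpos ℓ hℓI
  have hsub : ∀ x ∈ I, x ≤ ℓ := fun x hx => Finset.le_sup (f := id) hx
  have htI : 1 ≤ I.card := Finset.card_pos.mpr hI
  have htℓ : I.card ≤ ℓ := by
    have hss : I ⊆ Finset.Icc 1 ℓ := by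
      intro x hx; simp only [Finset.mem_Icc]; exact ⟨hIpos x hx, hsub x hx⟩
    have := Finset.card_le_card hss
    rw [Nat.card_Icc] at this
    omega
  have hcardE : (I.erase ℓ).card = I.card - 1 := Finset.card_erase_of_mem hℓI
  have hMaps : ∀ w ∈ {w ∈ Seqs L n | Des L w = ↑I ∧ ∀ j ∈ Finset.Icc 1 n, mult L w j = m},
      truncF ℓ w ∈ {v ∈ Seqs ℓ n | Des ℓ v = ↑(I.erase ℓ) ∧ v ℓ ≠ 1} := by
    rintro w ⟨⟨hw1, hw2⟩, hwDes, hwmult⟩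
    have hℓDes : ℓ ∈ Des L w := by rw [hwDes]; exact_mod_cast hℓI
    obtain ⟨-, hℓL, hdesc⟩ := hℓDes
    have hwp1 : 1 ≤ w (ℓ + 1) := by
      have := hw1 (ℓ + 1) (by simp only [Finset.mem_Icc]; omega)
      simp only [Finset.mem_Icc] at this
      omega
    refine ⟨⟨?_, ?_⟩, ?_, ?_⟩
    · intro i hi
      have hi' := hi
      simp only [Finset.mem_Icc] at hi'
      rw [truncF_eq ℓ w i hi'.1 hi'.2]
      exact hw1 i (by simp only [Finset.mem_Icc]; omega)
    · intro i hi
      exact truncF_eq0 ℓ w i hi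
    · ext i
      simp only [Finset.mem_coe, Finset.mem_erase]
      constructor
      · rintro ⟨h1, h2, h3⟩
        rw [truncF_eq ℓ w i h1 (by omega), truncF_eq ℓ w (i + 1) (by omega) (by omega)] at h3
        have hiD : i ∈ Des L w := ⟨h1, by omega, h3⟩
        rw [hwDes] at hiD
        simp only [Finset.mem_coe] at hiD
        exact ⟨by omega, hiD⟩
      · rintro ⟨hne, hiI⟩
        have hiD : i ∈ Des L w := by rw [hwDes]; exact_mod_cast hiI
        obtain ⟨h1, h2, h3⟩ := hiD
        have hiℓ : i < ℓ := lt_of_le_of_ne (hsub i hiI) hne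
        refine ⟨h1, hiℓ, ?_⟩
        rw [truncF_eq ℓ w i h1 (by omega), truncF_eq ℓ w (i + 1) (by omega) (by omega)]
        exact h3
    · rw [truncF_eq ℓ w ℓ hℓ1 le_rfl]
      omega
  have hInj : ∀ w ∈ {w ∈ Seqs L n | Des L w = ↑I ∧ ∀ j ∈ Finset.Icc 1 n, mult L w j = m},
      ∀ w' ∈ {w ∈ Seqs L n | Des L w = ↑I ∧ ∀ j ∈ Finset.Icc 1 n, mult L w j = m},
      truncF ℓ w = truncF ℓ w' → w = w' := by
    rintro w ⟨⟨hw1, hw2⟩, hwDes, hwmult⟩ w' ⟨⟨hw'1, hw'2⟩, hw'Des, hw'mult⟩ htr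
    have key : ∀ (u u' : ℕ → ℕ), (∀ i ∈ Finset.Icc 1 L, u i ∈ Finset.Icc 1 n) →
        Des L u' = ↑I → (∀ j ∈ Finset.Icc 1 n, mult L u j = m) →
        (∀ j ∈ Finset.Icc 1 n, mult L u' j = m) →
        ∀ i, ℓ < i → i ≤ L → (∀ k, k < i → u k = u' k) → u i < u' i → False := by
      intro u u' hu1 hu'Des humult hu'mult i hi1 hi2 hagree hlt
      have hji : u i ∈ Finset.Icc 1 n := hu1 i (by simp only [Finset.mem_Icc]; omega)
      have hiF : i ∈ (Finset.Icc 1 L).filter (fun k => u k = u i) :=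
        Finset.mem_filter.mpr ⟨Finset.mem_Icc.mpr ⟨by omega, hi2⟩, rfl⟩
      have hsubset : (Finset.Icc 1 L).filter (fun k => u' k = u i) ⊆
          ((Finset.Icc 1 L).filter (fun k => u k = u i)).erase i := by
        intro k hk
        simp only [Finset.mem_filter, Finset.mem_Icc] at hk
        obtain ⟨⟨hk1, hk2⟩, hk3⟩ := hk
        have hki : k < i := by
          by_contra hge
          push_neg at hge
          have hmono : u' i ≤ u' k := by
            apply des_mono L u' I hu'Des i (by omega) k hge hk2
            intro p hp hp' hpI
            have := hsub p hpI
            omega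
          omega
        simp only [Finset.mem_erase, Finset.mem_filter, Finset.mem_Icc]
        exact ⟨by omega, ⟨hk1, hk2⟩, (hagree k hki).trans hk3⟩
      have hc1 := Finset.card_le_card hsubset
      rw [Finset.card_erase_of_mem hiF] at hc1
      have hpos : 0 < ((Finset.Icc 1 L).filter (fun k => u k = u i)).card :=
        Finset.card_pos.mpr ⟨i, hiF⟩
      have e1 : mult L u (u i) = m := humult (u i) hji
      have e2 : mult L u' (u i) = m := hu'mult (u i) hji
      simp only [mult] at e1 e2
      omega
    funext i
    induction i using Nat.strong_induction_on with
    | _ i ih =>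
      by_cases hcase : i ∈ Finset.Icc 1 L
      · have hcase' := hcase
        simp only [Finset.mem_Icc] at hcase'
        by_cases hiℓ : i ≤ ℓ
        · have := congrFun htr i
          rwa [truncF_eq ℓ w i hcase'.1 hiℓ, truncF_eq ℓ w' i hcase'.1 hiℓ] at this
        · push_neg at hiℓ
          by_contra hne
          rcases Nat.lt_or_ge (w i) (w' i) with h | h
          · exact key w w' hw1 hw'Des hwmult hw'mult i hiℓ hcase'.2 (fun k hk => ih k hk) h
          · have h' : w' i < w i := by omega
            exact key w' w hw'1 hwDes hw'mult hwmult i hiℓ hcase'.2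
              (fun k hk => (ih k hk).symm) h'
      · rw [hw2 i hcase, hw'2 i hcase]
  have hSurj : ∀ v ∈ {v ∈ Seqs ℓ n | Des ℓ v = ↑(I.erase ℓ) ∧ v ℓ ≠ 1},
      ∃ w ∈ {w ∈ Seqs L n | Des L w = ↑I ∧ ∀ j ∈ Finset.Icc 1 n, mult L w j = m},
      truncF ℓ w = v := by
    rintro v ⟨⟨hv1, hv2⟩, hvDes, hvne⟩
    have hmle : ∀ j, mult ℓ v j ≤ m := by
      intro j
      have := mult_bound ℓ n v hv1 (I.erase ℓ) hvDes j
      rw [hcardE] at this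
      omega
    have hm1 : mult ℓ v 1 < m := by
      have := mult_one_bound ℓ n v hv1 I hIpos hsub hℓ1 hℓI hvDes hvne
      omega
    set c : ℕ → ℕ := fun j => ∑ l ∈ Finset.Icc 1 j, (m - mult ℓ v l) with hc
    have hc0 : c 0 = 0 := by simp [hc]
    have hcstep : ∀ j : ℕ, c (j + 1) = c j + (m - mult ℓ v (j + 1)) := by
      intro j
      simp only [hc]
      rw [Finset.sum_Icc_succ_top (by omega)]
    have hcmono : ∀ j j', j ≤ j' → c j ≤ c j' := by
      intro j j' h
      apply Finset.sum_le_sum_of_subset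
      intro x
      simp only [Finset.mem_Icc]
      omega
    have hc1 : 1 ≤ c 1 := by
      have h := hcstep 0
      rw [hc0] at h
      norm_num at h
      omega
    have hcn : ℓ + c n = L := by
      have hsum : ∑ l ∈ Finset.Icc 1 n, ((m - mult ℓ v l) + mult ℓ v l)
          = ∑ l ∈ Finset.Icc 1 n, m := by
        apply Finset.sum_congr rfl
        intro l _
        have := hmle l
        omega
      rw [Finset.sum_add_distrib, mult_sum_eq ℓ n v hv1, Finset.sum_const, Nat.card_Icc] at hsum
      simp only [smul_eq_mul, Nat.add_sub_cancel] at hsum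
      have hcneq : c n = ∑ l ∈ Finset.Icc 1 n, (m - mult ℓ v l) := rfl
      omega
    have hcn1 : 1 ≤ c n := le_trans hc1 (hcmono 1 n hn)
    have hℓL : ℓ < L := by omega
    set E : ℕ → ℕ := fun k => 1 + ((Finset.Icc 1 n).filter fun j => c j < k).card with hE
    have hEmono : ∀ k k', k ≤ k' → E k ≤ E k' := by
      intro k k' h
      have hss : (Finset.Icc 1 n).filter (fun j => c j < k) ⊆
          (Finset.Icc 1 n).filter (fun j => c j < k') := by
        intro x hx
        simp only [Finset.mem_filter] at hx ⊢
        exact ⟨hx.1, by omega⟩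
      simp only [hE]
      exact Nat.add_le_add_left (Finset.card_le_card hss) 1
    have hE1 : E 1 = 1 := by
      have hfil : (Finset.Icc 1 n).filter (fun j => c j < 1) = ∅ := by
        apply Finset.filter_false_of_mem
        intro j hj
        simp only [Finset.mem_Icc] at hj
        have := hcmono 1 j hj.1
        omega
      simp only [hE]
      rw [hfil]
      simp
    have hEle : ∀ k, 1 ≤ k → k ≤ c n → 1 ≤ E k ∧ E k ≤ n := by
      intro k hk1 hk2
      refine ⟨by simp [hE], ?_⟩
      have hss : (Finset.Icc 1 n).filter (fun j => c j < k) ⊆ (Finset.Icc 1 n).erase n := by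
        intro x hx
        simp only [Finset.mem_filter, Finset.mem_Icc] at hx
        simp only [Finset.mem_erase, Finset.mem_Icc]
        refine ⟨?_, hx.1⟩
        rintro rfl
        omega
      have hcard := Finset.card_le_card hss
      rw [Finset.card_erase_of_mem (by simp only [Finset.mem_Icc]; omega), Nat.card_Icc] at hcard
      simp only [hE]
      omega
    have hexists : ∀ k, 1 ≤ k → k ≤ c n → ∃ j, 1 ≤ j ∧ j ≤ n ∧ c (j - 1) < k ∧ k ≤ c j := by
      intro k hk1 hk2
      have hns : n ∈ (Finset.Icc 1 n).filter (fun j => k ≤ c j) := by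
        simp only [Finset.mem_filter, Finset.mem_Icc]
        omega
      have hne : ((Finset.Icc 1 n).filter (fun j => k ≤ c j)).Nonempty := ⟨n, hns⟩
      set j0 := ((Finset.Icc 1 n).filter (fun j => k ≤ c j)).min' hne with hj0
      have hj0s := Finset.min'_mem _ hne
      rw [← hj0] at hj0s
      simp only [Finset.mem_filter, Finset.mem_Icc] at hj0s
      refine ⟨j0, hj0s.1.1, hj0s.1.2, ?_, hj0s.2⟩
      by_cases h1 : j0 = 1
      · rw [h1]
        simpa [hc0] using (show 0 < k by omega)
      · by_contra hge
        push_neg at hge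
        have hmem : j0 - 1 ∈ (Finset.Icc 1 n).filter (fun j => k ≤ c j) := by
          simp only [Finset.mem_filter, Finset.mem_Icc]
          exact ⟨⟨by omega, by omega⟩, hge⟩
        have := Finset.min'_le _ _ hmem
        omega
    have hEeq : ∀ j k, 1 ≤ j → j ≤ n → 1 ≤ k → k ≤ c n →
        (E k = j ↔ (c (j - 1) < k ∧ k ≤ c j)) := by
      have back : ∀ j k, 1 ≤ j → j ≤ n → c (j - 1) < k → k ≤ c j → E k = j := by
        intro j k hj1 hjn hlt hle
        have hfil : (Finset.Icc 1 n).filter (fun l => c l < k) = Finset.Icc 1 (j - 1) := by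
          ext l
          simp only [Finset.mem_filter, Finset.mem_Icc]
          constructor
          · rintro ⟨⟨hl1, hln⟩, hlk⟩
            refine ⟨hl1, ?_⟩
            by_contra hgt
            push_neg at hgt
            have := hcmono j l (by omega)
            omega
          · rintro ⟨hl1, hlj⟩
            have := hcmono l (j - 1) hlj
            exact ⟨⟨hl1, by omega⟩, by omega⟩
        simp only [hE]
        rw [hfil, Nat.card_Icc]
        omega
      intro j k hj1 hjn hk1 hkcn
      constructor
      · intro hEk
        obtain ⟨j', hj'1, hj'n, hlt, hle⟩ := hexists k hk1 hkcn
        have hEk' := back j' k hj'1 hj'n hlt hle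
        have : j = j' := by omega
        subst this
        exact ⟨hlt, hle⟩
      · rintro ⟨hlt, hle⟩
        exact back j k hj1 hjn hlt hle
    set w : ℕ → ℕ := fun i => if i ≤ ℓ then v i else if i ≤ L then E (i - ℓ) else 0 with hw
    have hwlow : ∀ i, i ≤ ℓ → w i = v i := by
      intro i h
      simp only [hw, if_pos h]
    have hwmid : ∀ i, ℓ < i → i ≤ L → w i = E (i - ℓ) := by
      intro i h1 h2
      simp only [hw]
      rw [if_neg (by omega), if_pos h2]
    have hwhigh : ∀ i, L < i → w i = 0 := by
      intro i h
      simp only [hw]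
      rw [if_neg (by omega), if_neg (by omega)]
    refine ⟨w, ⟨⟨?_, ?_⟩, ?_, ?_⟩, ?_⟩
    · -- entries in [1, n]
      intro i hi
      simp only [Finset.mem_Icc] at hi
      by_cases h : i ≤ ℓ
      · rw [hwlow i h]
        exact hv1 i (by simp only [Finset.mem_Icc]; omega)
      · push_neg at h
        rw [hwmid i h hi.2]
        have := hEle (i - ℓ) (by omega) (by omega)
        simp only [Finset.mem_Icc]
        omega
    · -- zero outside
      intro i hi
      simp only [Finset.mem_Icc] at hi
      push_neg at hi
      by_cases h0 : i = 0
      · subst h0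
        rw [hwlow 0 (by omega)]
        exact hv2 0 (by simp)
      · have : L < i := by omega
        exact hwhigh i this
    · -- descent set
      ext i
      simp only [Finset.mem_coe]
      constructor
      · rintro ⟨h1, h2, h3⟩
        rcases lt_trichotomy i ℓ with hiℓ | hiℓ | hiℓ
        · rw [hwlow i (by omega), hwlow (i + 1) (by omega)] at h3
          have hiD : i ∈ Des ℓ v := ⟨h1, hiℓ, h3⟩
          rw [hvDes] at hiD
          simp only [Finset.mem_coe, Finset.mem_erase] at hiD
          exact hiD.2
        · subst hiℓ
          exact hℓI
        · rw [hwmid i hiℓ (by omega), hwmid (i + 1) (by omega) (by omega)] at h3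
          have := hEmono (i - ℓ) (i + 1 - ℓ) (by omega)
          omega
      · intro hiI
        have h1 : 1 ≤ i := hIpos i hiI
        have h2 : i ≤ ℓ := hsub i hiI
        rcases eq_or_lt_of_le h2 with heq | hlt
        · rw [heq]
          refine ⟨hℓ1, hℓL, ?_⟩
          rw [hwlow ℓ le_rfl, hwmid (ℓ + 1) (by omega) (by omega)]
          have hi1 : ℓ + 1 - ℓ = 1 := by omega
          rw [hi1, hE1]
          have := hv1 ℓ (by simp only [Finset.mem_Icc]; omega)
          simp only [Finset.mem_Icc] at this
          omega
        · have hiD : i ∈ Des ℓ v := by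
            rw [hvDes]
            simp only [Finset.mem_coe, Finset.mem_erase]
            exact ⟨by omega, hiI⟩
          obtain ⟨-, -, h3⟩ := hiD
          refine ⟨h1, by omega, ?_⟩
          rw [hwlow i (by omega), hwlow (i + 1) (by omega)]
          exact h3
    · -- multiplicities
      intro j hj
      simp only [Finset.mem_Icc] at hj
      have hsplit : Finset.Icc 1 L = Finset.Icc 1 ℓ ∪ Finset.Ioc ℓ L := by
        ext x
        simp only [Finset.mem_Icc, Finset.mem_union, Finset.mem_Ioc]
        omega
      have hdisj : Disjoint (Finset.Icc 1 ℓ) (Finset.Ioc ℓ L) := by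
        simp only [Finset.disjoint_left, Finset.mem_Icc, Finset.mem_Ioc]
        intro x hx hx'
        omega
      have h1 : (Finset.Icc 1 ℓ).filter (fun i => w i = j)
          = (Finset.Icc 1 ℓ).filter (fun i => v i = j) := by
        apply Finset.filter_congr
        intro x hx
        simp only [Finset.mem_Icc] at hx
        rw [hwlow x hx.2]
      have h2 : (Finset.Ioc ℓ L).filter (fun i => w i = j)
          = Finset.Ioc (ℓ + c (j - 1)) (ℓ + c j) := by
        have hcjn : c j ≤ c n := hcmono j n hj.2
        ext i
        simp only [Finset.mem_filter, Finset.mem_Ioc]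
        constructor
        · rintro ⟨⟨hi1, hi2⟩, hi3⟩
          rw [hwmid i hi1 hi2] at hi3
          have hk := (hEeq j (i - ℓ) hj.1 hj.2 (by omega) (by omega)).mp hi3
          omega
        · rintro ⟨hi1, hi2⟩
          refine ⟨⟨by omega, by omega⟩, ?_⟩
          rw [hwmid i (by omega) (by omega)]
          exact (hEeq j (i - ℓ) hj.1 hj.2 (by omega) (by omega)).mpr ⟨by omega, by omega⟩
      show mult L w j = m
      simp only [mult]
      rw [hsplit, Finset.filter_union,
        Finset.card_union_of_disjoint (Finset.disjoint_filter_filter hdisj), h1, h2,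
        Nat.card_Ioc]
      have hstep := hcstep (j - 1)
      have hjj : j - 1 + 1 = j := by omega
      rw [hjj] at hstep
      have hmj := hmle j
      have hmm : ((Finset.Icc 1 ℓ).filter fun i => v i = j).card = mult ℓ v j := rfl
      omega
    · -- truncF ℓ w = v
      funext i
      by_cases h : i ∈ Finset.Icc 1 ℓ
      · have h' := h
        simp only [Finset.mem_Icc] at h'
        rw [truncF_eq ℓ w i h'.1 h'.2, hwlow i h'.2]
      · rw [truncF_eq0 ℓ w i h]
        exact (hv2 i h).symm
  have hbij : Set.BijOn (truncF ℓ)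
      {w ∈ Seqs L n | Des L w = ↑I ∧ ∀ j ∈ Finset.Icc 1 n, mult L w j = m}
      {v ∈ Seqs ℓ n | Des ℓ v = ↑(I.erase ℓ) ∧ v ℓ ≠ 1} := by
    refine ⟨hMaps, hInj, ?_⟩
    intro v hv
    obtain ⟨w, hwS, hwt⟩ := hSurj v hv
    exact ⟨w, hwS, hwt⟩
  rw [← hbij.image_eq]
  exact (Set.ncard_image_of_injOn hbij.injOn).symm
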